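/- If {k_i}_{i∈I} is a family of fields, then the Zariski prime spectrum Spec(∏_{i∈I} k_i) is homeomorphic to the Stone–Čech compactification of the discrete space I. -/
import Mathlib

open Set

section Aux

variable {I : Type*} (k : I → Type*) [∀ i, Field (k i)]

open Classical in
/-- Indicator idempotent of a set. -/
noncomputable def eSet (A : Set I) : ∀ i, k i := fun i => if i ∈ A then 1 else 0

lemma eSet_apply_of_mem {A : Set I} {i : I} (h : i ∈ A) : eSet k A i = 1 := by
  simp [eSet, h]

lemma eSet_apply_of_notMem {A : Set I} {i : I} (h : i ∉ A) : eSet k A i = 0 := by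
  simp [eSet, h]

lemma eSet_mul (A B : Set I) : eSet k A * eSet k B = eSet k (A ∩ B) := by
  funext i
  by_cases hA : i ∈ A <;> by_cases hB : i ∈ B <;>
    simp [eSet_apply_of_mem, eSet_apply_of_notMem, hA, hB,
      Set.mem_inter_iff, eSet]

lemma eSet_empty : eSet k (∅ : Set I) = 0 := by
  funext i; simp [eSet]

lemma eSet_add_compl (A : Set I) : eSet k A + eSet k Aᶜ = 1 := by
  funext i
  by_cases hA : i ∈ A <;> simp [eSet, hA]

lemma eSet_union (A B : Set I) :
    eSet k (A ∪ B) = eSet k A + eSet k B - eSet k A * eSet k B := by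
  funext i
  by_cases hA : i ∈ A <;> by_cases hB : i ∈ B <;> simp [eSet, hA, hB]

lemma eSet_compl_mem_iff (P : PrimeSpectrum (∀ i, k i)) (A : Set I) :
    eSet k Aᶜ ∈ P.asIdeal ↔ eSet k A ∉ P.asIdeal := by
  constructor
  · intro hsc hs
    have h1 : (1 : ∀ i, k i) ∈ P.asIdeal := by
      rw [← eSet_add_compl k A]; exact add_mem hs hsc
    exact P.isPrime.ne_top (Ideal.eq_top_iff_one _ |>.mpr h1)
  · intro hs
    have h0 : eSet k A * eSet k Aᶜ ∈ P.asIdeal := by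
      rw [eSet_mul, Set.inter_compl_self, eSet_empty]; exact zero_mem _
    exact (P.isPrime.mem_or_mem h0).resolve_left hs

/-- The prime ideal attached to an ultrafilter. -/
def uIdeal (U : Ultrafilter I) : Ideal (∀ i, k i) where
  carrier := {x | {i | x i = 0} ∈ U}
  zero_mem' := by
    have : {i | (0 : ∀ i, k i) i = 0} = univ := by ext i; simp
    show {i | (0 : ∀ i, k i) i = 0} ∈ U
    rw [this]; exact Filter.univ_mem
  add_mem' := by
    intro x y hx hy
    refine Filter.mem_of_superset (Filter.inter_mem hx hy) ?_
    rintro i ⟨h1, h2⟩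
    simp only [mem_setOf_eq] at h1 h2 ⊢
    simp [h1, h2]
  smul_mem' := by
    intro c x hx
    refine Filter.mem_of_superset hx ?_
    intro i h1
    simp only [mem_setOf_eq] at h1 ⊢
    simp [h1]

lemma uIdeal_isPrime (U : Ultrafilter I) : (uIdeal k U).IsPrime := by
  constructor
  · intro h
    rw [Ideal.eq_top_iff_one] at h
    have h1 : {i | (1 : ∀ i, k i) i = 0} ∈ U := h
    have h2 : (∅ : Set I) ∈ U := by
      convert h1 using 1
      ext i; simp
    exact U.toFilter.empty_notMem h2
  · intro x y hxy
    have : {i | x i = 0} ∪ {i | y i = 0} ∈ U := by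
      refine Filter.mem_of_superset hxy ?_
      intro i hi
      simp only [mem_setOf_eq, Pi.mul_apply, mul_eq_zero] at hi
      exact hi
    exact (Ultrafilter.union_mem_iff.mp this).imp id id

/-- The ultrafilter attached to a prime ideal. -/
def pUltra (P : PrimeSpectrum (∀ i, k i)) : Ultrafilter I :=
  Ultrafilter.ofComplNotMemIff
    { sets := {A | eSet k Aᶜ ∈ P.asIdeal}
      univ_sets := by simp [eSet_empty]
      sets_of_superset := by
        intro A B hA hAB
        have : eSet k Bᶜ = eSet k Bᶜ * eSet k Aᶜ := by
          rw [eSet_mul, Set.inter_eq_left.mpr (Set.compl_subset_compl.mpr hAB)]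
        show eSet k Bᶜ ∈ P.asIdeal
        rw [this]
        exact Ideal.mul_mem_left _ _ hA
      inter_sets := by
        intro A B hA hB
        show eSet k (A ∩ B)ᶜ ∈ P.asIdeal
        rw [Set.compl_inter, eSet_union]
        exact sub_mem (add_mem hA hB) (Ideal.mul_mem_right _ _ hA) }
    (by
      intro s
      show eSet k sᶜᶜ ∉ P.asIdeal ↔ eSet k sᶜ ∈ P.asIdeal
      rw [compl_compl]
      exact (eSet_compl_mem_iff k P s).symm)

lemma mem_pUltra (P : PrimeSpectrum (∀ i, k i)) (A : Set I) :
    A ∈ pUltra k P ↔ eSet k Aᶜ ∈ P.asIdeal := Iff.rfl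

lemma mem_pUltra' (P : PrimeSpectrum (∀ i, k i)) (A : Set I) :
    A ∈ pUltra k P ↔ eSet k A ∉ P.asIdeal :=
  (mem_pUltra k P A).trans (eSet_compl_mem_iff k P A)

end Aux

/-- If `{k i}_{i ∈ I}` is a family of fields, then the Zariski prime spectrum of the
product ring `∏ i, k i` is homeomorphic to the Stone–Čech compactification of the
discrete space `I`, i.e. the space of ultrafilters on `I`. -/
theorem primeSpectrum_pi_field_homeomorph_ultrafilter {I : Type*} (k : I → Type*)
    [∀ i, Field (k i)] :
    Nonempty (PrimeSpectrum (∀ i, k i) ≃ₜ Ultrafilter I) := by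
  refine ⟨{
    toFun := pUltra k
    invFun := fun U => ⟨uIdeal k U, uIdeal_isPrime k U⟩
    left_inv := ?_
    right_inv := ?_
    continuous_toFun := ?_
    continuous_invFun := ?_ }⟩
  · -- invFun (pUltra P) = P
    intro P
    ext x
    show {i | x i = 0} ∈ pUltra k P ↔ x ∈ P.asIdeal
    rw [mem_pUltra]
    constructor
    · intro h
      have hxe : x = x * eSet k {i | x i = 0}ᶜ := by
        funext i
        by_cases hx : x i = 0
        · simp [hx]
        · rw [Pi.mul_apply, eSet_apply_of_mem k (by simpa using hx), mul_one]
      rw [hxe]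
      exact Ideal.mul_mem_left _ _ h
    · intro h
      have hxe : eSet k {i | x i = 0}ᶜ = x * fun i => (x i)⁻¹ := by
        funext i
        by_cases hx : x i = 0
        · rw [Pi.mul_apply, hx, zero_mul, eSet_apply_of_notMem k (by simpa using hx)]
        · rw [Pi.mul_apply, mul_inv_cancel₀ hx, eSet_apply_of_mem k (by simpa using hx)]
      rw [hxe]
      exact Ideal.mul_mem_right _ _ h
  · -- pUltra (uIdeal U) = U
    intro U
    ext A
    rw [mem_pUltra]
    show {i | eSet k Aᶜ i = 0} ∈ U ↔ A ∈ U
    have hZ : {i | eSet (I := I) k Aᶜ i = 0} = A := by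
      ext i
      by_cases hA : i ∈ A
      · simp [eSet_apply_of_mem k (show i ∈ A from hA), hA,
          eSet_apply_of_notMem k (show i ∉ Aᶜ by simpa using hA)]
      · simp [hA, eSet_apply_of_mem k (show i ∈ Aᶜ by simpa using hA)]
    rw [hZ]
  · -- continuity of pUltra
    refine ultrafilterBasis_is_basis.continuous_iff.mpr ?_
    rintro _ ⟨A, rfl⟩
    have hpre : pUltra k ⁻¹' {u | A ∈ u} = ↑(PrimeSpectrum.basicOpen (eSet k A)) := by
      ext P
      simp only [Set.mem_preimage, Set.mem_setOf_eq, mem_pUltra' k P A,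
        PrimeSpectrum.basicOpen_eq_zeroLocus_compl, Set.mem_compl_iff,
        PrimeSpectrum.mem_zeroLocus, Set.singleton_subset_iff, SetLike.mem_coe]
    rw [hpre]
    exact (PrimeSpectrum.basicOpen _).isOpen
  · -- continuity of U ↦ uIdeal U
    refine PrimeSpectrum.isTopologicalBasis_basic_opens.continuous_iff.mpr ?_
    rintro _ ⟨r, rfl⟩
    have hpre : (fun U : Ultrafilter I => (⟨uIdeal k U, uIdeal_isPrime k U⟩ :
        PrimeSpectrum (∀ i, k i))) ⁻¹' ↑(PrimeSpectrum.basicOpen r)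
        = {u : Ultrafilter I | {i | r i = 0}ᶜ ∈ u} := by
      ext U
      simp only [Set.mem_preimage, PrimeSpectrum.basicOpen_eq_zeroLocus_compl,
        Set.mem_compl_iff, PrimeSpectrum.mem_zeroLocus, Set.singleton_subset_iff,
        SetLike.mem_coe, Set.mem_setOf_eq, Ultrafilter.compl_mem_iff_notMem]
      rfl
    rw [hpre]
    exact ultrafilter_isOpen_basic _
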